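/- arXiv:2006.00287 — 3 statements merged into one kernel-verified Lean document; each statement's English description precedes it below -/
import Mathlib

section
/- Let R be an associative ring with identity in which 3 is a unit, and let k ≥ 1. Then (R^[3])^k ⊆ R^[2k+1], i.e. every product of k elements of R^[3] lies in R^[2k+1]. -/
/-- The left-normed iterated Lie commutator `[x, l₁, l₂, …, l_k]`
where `[a, b] = a * b - b * a`. -/
def leftNormedLie {R : Type*} [Ring R] (x : R) (l : List R) : R :=
  l.foldl (fun a b => a * b - b * a) x

/-- `lieTerm R n` is `R^[n]`: for `n ≥ 2`, the two-sided ideal of `R` generated by all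
left-normed Lie commutators `[x₁, …, xₙ]` of ring elements; `R^[1] = R` (and `R^[0] = R`). -/
def lieTerm (R : Type*) [Ring R] (n : ℕ) : TwoSidedIdeal R :=
  if n ≤ 1 then ⊤
  else TwoSidedIdeal.span
    {r : R | ∃ (x : R) (l : List R), l.length = n - 1 ∧ r = leftNormedLie x l}

/-- `strongLieTerm R n` is `R^(n)`: `R^(1) = R` and for `n ≥ 2`, the two-sided ideal of `R`
generated by all `[x, y]` with `x ∈ R^(n-1)` and `y ∈ R`. -/
def strongLieTerm (R : Type*) [Ring R] : ℕ → TwoSidedIdeal R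
  | 0 => ⊤
  | 1 => ⊤
  | n + 2 => TwoSidedIdeal.span
      {r : R | ∃ x, x ∈ strongLieTerm R (n + 1) ∧ ∃ y : R, r = x * y - y * x}

/-- A ring is Lie nilpotent if `R^[n] = 0` for some positive integer `n`. -/
def IsLieNilpotentRing (R : Type*) [Ring R] : Prop :=
  ∃ n : ℕ, 0 < n ∧ lieTerm R n = ⊥

/-- The lower Lie nilpotency index `t_L(R)`: the minimal positive `n` with `R^[n] = 0`. -/
noncomputable def lowerLieIndex (R : Type*) [Ring R] : ℕ :=
  sInf {n : ℕ | 0 < n ∧ lieTerm R n = ⊥}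

/-- The upper Lie nilpotency index `t^L(R)`: the minimal positive `n` with `R^(n) = 0`. -/
noncomputable def upperLieIndex (R : Type*) [Ring R] : ℕ :=
  sInf {n : ℕ | 0 < n ∧ strongLieTerm R n = ⊥}


namespace LieNilAux

set_option maxHeartbeats 2000000

variable {R : Type*} [Ring R]

/-- bracket -/
def br (a b : R) : R := a * b - b * a

/-- `IsLNC k c` : `c` is a left-normed Lie commutator with `k` appended entries
(i.e. of weight `k+1`). -/
def IsLNC (k : ℕ) (c : R) : Prop :=
  ∃ (x : R) (l : List R), l.length = k ∧ c = leftNormedLie x l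

lemma isLNC_zero (x : R) : IsLNC 0 x := ⟨x, [], rfl, rfl⟩

lemma IsLNC.brr {k : ℕ} {c : R} (h : IsLNC k c) (y : R) : IsLNC (k + 1) (br c y) := by
  obtain ⟨x, l, hl, rfl⟩ := h
  refine ⟨x, l ++ [y], by simp [hl], ?_⟩
  simp [leftNormedLie, List.foldl_append, br]

lemma IsLNC.down {k : ℕ} {c : R} (h : IsLNC (k + 1) c) : IsLNC k c := by
  obtain ⟨x, l, hl, rfl⟩ := h
  cases l with
  | nil => simp at hl
  | cons y t => exact ⟨br x y, t, by simpa using hl, rfl⟩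

lemma IsLNC.mem {k : ℕ} {c : R} (h : IsLNC k c) : c ∈ lieTerm R (k + 1) := by
  unfold lieTerm
  split
  · trivial
  · next hn =>
    obtain ⟨x, l, hl, rfl⟩ := h
    exact TwoSidedIdeal.subset_span ⟨x, l, by simp [hl], rfl⟩

lemma mem_app4 {n : ℕ} {c : R} (hc : IsLNC n c) (b1 b2 b3 b4 : R) :
    br (br (br (br c b1) b2) b3) b4 ∈ lieTerm R (n + 5) := by
  have h := ((((hc.brr b1).brr b2).brr b3).brr b4).mem
  have e : n + 1 + 1 + 1 + 1 + 1 = n + 5 := by omega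
  rwa [e] at h

lemma mem_app5 {n : ℕ} {c : R} (hc : IsLNC n c) (b1 b2 b3 b4 b5 : R) :
    br (br (br (br (br c b1) b2) b3) b4) b5 ∈ lieTerm R (n + 5) := by
  have h := ((((((hc.brr b1).brr b2).brr b3).brr b4).brr b5).down).mem
  have e : n + 1 + 1 + 1 + 1 + 1 = n + 5 := by omega
  rwa [e] at h

lemma mem_of_three_zsmul (h3 : IsUnit (3 : R)) {I : TwoSidedIdeal R} {x : R}
    (h : (3 : ℤ) • x ∈ I) : x ∈ I := by
  have h2 : (3 : R) * x ∈ I := by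
    have e : (3 : ℤ) • x = (3 : R) * x := by
      rw [zsmul_eq_mul]; norm_num
    rwa [e] at h
  obtain ⟨u, hu⟩ := h3
  have e2 : x = (↑u⁻¹ : R) * ((3 : R) * x) := by
    rw [← hu, ← mul_assoc, Units.inv_mul, one_mul]
  rw [e2]
  exact I.mul_mem_left _ _ h2

/-- The key identity: `3·([d,e,f]·[c,r,s])` decomposes into left-normed commutators
that contain `c` as a standalone entry with at least four further entries. -/
theorem key_identity (c r s d e f : R) :
    (3 : ℤ) • (br (br d e) f * br (br c r) s) =
      ((-1 : ℤ) • ((br (br (br (br (br c d) s) e) r) f))) +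
      ((1 : ℤ) • ((br (br (br (br (br c d) r) f) e) s))) +
      ((-1 : ℤ) • ((br (br (br (br (br c d) f) e) r) s))) +
      ((1 : ℤ) • ((br (br (br (br (br c d) r) e) s) f))) +
      ((-1 : ℤ) • ((br (br (br (br (br c d) s) f) r) e))) +
      ((-4 : ℤ) • ((br (br (br (br (br c r) s) d) e) f))) +
      ((1 : ℤ) • ((br (br (br (br (br c e) d) f) r) s))) +
      ((-1 : ℤ) • ((br (br (br (br (br c e) d) f) s) r))) +
      ((1 : ℤ) • ((br (br (br (br (br c e) d) s) r) f))) +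
      ((-2 : ℤ) • ((br (br (br (br (br c e) d) r) s) f))) +
      ((-1 : ℤ) • ((br (br (br (br (br c d) s) r) e) f))) +
      ((1 : ℤ) • ((br (br (br (br (br c e) r) d) s) f))) +
      ((-1 : ℤ) • ((br (br (br (br (br c d) s) f) e) r))) +
      ((-2 : ℤ) • ((br (br (br (br (br c r) d) f) e) s))) +
      ((-2 : ℤ) • ((br (br (br (br (br c r) d) f) s) e))) +
      ((1 : ℤ) • ((br (br (br (br (br c d) r) f) s) e))) +
      ((-1 : ℤ) • ((br (br (br (br (br c r) d) s) f) e))) +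
      ((-1 : ℤ) • ((br (br (br (br (br c r) e) d) f) s))) +
      ((-1 : ℤ) • ((br (br (br (br (br c e) d) r) f) s))) +
      ((-2 : ℤ) • ((br (br (br (br (br c r) e) d) s) f))) +
      ((2 : ℤ) • ((br (br (br (br (br c f) r) d) e) s))) +
      ((-2 : ℤ) • ((br (br (br (br (br c r) f) d) e) s))) +
      ((-1 : ℤ) • ((br (br (br (br (br c e) f) d) r) s))) +
      ((-2 : ℤ) • ((br (br (br (br (br c r) s) d) f) e))) +
      ((1 : ℤ) • ((br (br (br (br (br c f) r) d) s) e))) +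
      ((-1 : ℤ) • ((br (br (br (br (br c e) s) r) d) f))) +
      ((-1 : ℤ) • ((br (br (br (br (br c e) s) d) r) f))) +
      ((-2 : ℤ) • ((br (br (br (br (br c f) d) r) e) s))) +
      ((-1 : ℤ) • ((br (br (br (br (br c r) f) d) s) e))) +
      ((1 : ℤ) • ((br (br (br (br (br c e) r) f) s) d))) +
      ((2 : ℤ) • ((br (br (br (br (br c r) f) s) d) e))) +
      ((-1 : ℤ) • ((br (br (br (br (br c e) r) f) d) s))) +
      ((-1 : ℤ) • ((br (br (br (br (br c e) s) f) r) d))) +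
      ((-1 : ℤ) • ((br (br (br (br (br c e) s) f) d) r))) +
      ((-1 : ℤ) • ((br (br (br (br (br c r) s) f) d) e))) +
      ((1 : ℤ) • ((br (br (br (br (br c f) r) e) s) d))) +
      ((-1 : ℤ) • ((br (br (br (br (br c f) e) r) s) d))) +
      ((2 : ℤ) • ((br (br (br (br (br c r) e) s) d) f))) +
      ((-1 : ℤ) • ((br (br (br (br (br c r) f) e) s) d))) +
      ((1 : ℤ) • ((br (br (br (br c e) f) r) d) * s)) +
      ((1 : ℤ) • ((br (br (br (br c e) f) d) r) * s)) +
      ((-2 : ℤ) • ((br (br (br (br (br c r) e) f) s) d))) +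
      ((1 : ℤ) • ((br (br (br (br c d) e) r) f) * s)) +
      ((1 : ℤ) • ((br (br (br (br c d) f) e) r) * s)) +
      ((1 : ℤ) • ((br (br (br (br c d) f) r) e) * s)) +
      ((2 : ℤ) • ((br (br (br (br c r) e) d) f) * s)) +
      ((1 : ℤ) • ((br (br (br (br c d) r) e) f) * s)) +
      ((1 : ℤ) • ((br (br (br (br c e) r) d) f) * s)) +
      ((1 : ℤ) • ((br (br (br (br c e) d) r) f) * s)) +
      ((2 : ℤ) • ((br (br (br (br c r) d) f) e) * s)) +
      ((2 : ℤ) • ((br (br (br (br c r) f) d) e) * s)) +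
      ((1 : ℤ) • ((br (br (br (br c d) e) s) f) * r)) +
      ((1 : ℤ) • ((br (br (br (br c d) e) f) s) * r)) +
      ((1 : ℤ) • ((br (br (br (br c d) f) s) e) * r)) +
      ((1 : ℤ) • ((br (br (br (br c d) s) f) e) * r)) +
      ((1 : ℤ) • ((br (br (br (br c e) d) f) s) * r)) +
      ((1 : ℤ) • ((br (br (br (br c e) f) s) d) * r)) +
      ((1 : ℤ) • ((br (br (br (br c d) r) e) s) * f)) +
      ((1 : ℤ) • ((br (br (br (br c d) e) r) s) * f)) +
      ((1 : ℤ) • ((br (br (br (br c d) s) e) r) * f)) +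
      ((1 : ℤ) • ((br (br (br (br c d) s) r) e) * f)) +
      ((1 : ℤ) • ((br (br (br (br c e) d) r) s) * f)) +
      ((3 : ℤ) • ((br (br (br (br c r) d) e) s) * f)) +
      ((1 : ℤ) • ((br (br (br (br c r) d) s) e) * f)) +
      ((1 : ℤ) • ((br (br (br (br c r) e) d) s) * f)) +
      ((1 : ℤ) • ((br (br (br (br c e) r) d) s) * f)) +
      ((4 : ℤ) • ((br (br (br (br c r) s) d) e) * f)) +
      ((1 : ℤ) • ((br (br (br (br c e) s) d) r) * f)) +
      ((1 : ℤ) • ((br (br (br (br c e) s) r) d) * f)) +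
      ((2 : ℤ) • ((br (br (br (br c r) d) f) s) * e)) +
      ((1 : ℤ) • ((br (br (br (br c d) r) f) s) * e)) +
      ((1 : ℤ) • ((br (br (br (br c d) f) s) r) * e)) +
      ((1 : ℤ) • ((br (br (br (br c d) s) f) r) * e)) +
      ((1 : ℤ) • ((br (br (br (br c d) r) s) f) * e)) +
      ((3 : ℤ) • ((br (br (br (br c r) d) s) f) * e)) +
      ((1 : ℤ) • ((br (br (br (br c r) s) f) d) * e)) +
      ((-1 : ℤ) • ((br (br (br (br c r) f) d) s) * e)) +
      ((2 : ℤ) • ((br (br (br (br c r) s) d) f) * e)) +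
      ((2 : ℤ) • ((br (br (br (br c r) f) s) d) * e)) +
      ((1 : ℤ) • ((br (br (br (br c e) r) s) f) * d)) +
      ((1 : ℤ) • ((br (br (br (br c e) s) f) d) * r)) +
      ((1 : ℤ) • ((br (br (br (br c e) f) s) r) * d)) +
      ((1 : ℤ) • ((br (br (br (br c r) e) s) d) * f)) +
      ((-1 : ℤ) • ((br (br (br (br (br c f) d) r) s) e))) +
      ((1 : ℤ) • ((br (br (br (br c e) r) f) s) * d)) +
      ((1 : ℤ) • ((br (br (br (br c e) s) f) r) * d)) +
      ((1 : ℤ) • ((br (br (br (br c r) e) s) f) * d)) +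
      ((-1 : ℤ) • ((br (br (br (br (br c r) e) s) f) d))) +
      ((2 : ℤ) • ((br (br (br (br c r) e) f) s) * d)) +
      ((1 : ℤ) • ((br (br (br (br c r) f) e) s) * d)) +
      ((3 : ℤ) • ((br (br (br (br c r) s) f) e) * d)) +
      ((1 : ℤ) • ((br (br (br (br c (d*e)) f) r) s))) +
      ((-1 : ℤ) • ((br (br (br (br c (d*e)) f) s) r))) +
      ((-1 : ℤ) • ((br (br (br (br c (d*e)) r) f) s))) +
      ((-1 : ℤ) • ((br (br (br (br c (d*e)) s) f) r))) +
      ((-1 : ℤ) • ((br (br (br (br (br c e) d) s) f) r))) +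
      ((1 : ℤ) • ((br (br (br (br c e) d) s) f) * r)) +
      ((-2 : ℤ) • ((br (br (br (br c (d*e)) r) s) f))) +
      ((1 : ℤ) • ((br (br (br (br c (d*e)) s) r) f))) +
      ((-1 : ℤ) • ((br (br (br (br c d) (e*f)) r) s))) +
      ((-1 : ℤ) • ((br (br (br (br c (d*r)) e) f) s))) +
      ((-1 : ℤ) • ((br (br (br (br (br c r) d) e) f) s))) +
      ((2 : ℤ) • ((br (br (br (br c r) d) e) f) * s)) +
      ((-2 : ℤ) • ((br (br (br (br c (d*r)) e) s) f))) +
      ((-2 : ℤ) • ((br (br (br (br (br c r) d) e) s) f))) +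
      ((1 : ℤ) • ((br (br (br (br c d) (e*r)) s) f))) +
      ((-1 : ℤ) • ((br (br (br (br c d) (e*s)) r) f))) +
      ((-2 : ℤ) • ((br (br (br (br c (d*f)) r) e) s))) +
      ((-1 : ℤ) • ((br (br (br (br c (d*r)) f) e) s))) +
      ((1 : ℤ) • ((br (br (br (br c d) (f*r)) e) s))) +
      ((-1 : ℤ) • ((br (br (br (br c d) (f*s)) e) r))) +
      ((1 : ℤ) • ((br (br (br (br c (d*r)) s) e) f))) +
      ((-1 : ℤ) • ((br (br (br (br c d) (r*s)) e) f))) +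
      ((-1 : ℤ) • ((br (br (br (br c (d*f)) r) s) e))) +
      ((-2 : ℤ) • ((br (br (br (br c (d*r)) f) s) e))) +
      ((1 : ℤ) • ((br (br (br (br c d) (f*r)) s) e))) +
      ((-1 : ℤ) • ((br (br (br (br c (d*r)) s) f) e))) +
      ((-1 : ℤ) • ((br (br (br (br c d) (f*s)) r) e))) +
      ((-1 : ℤ) • ((br (br (br (br c e) (d*f)) r) s))) +
      ((-1 : ℤ) • ((br (br (br (br c (e*r)) d) f) s))) +
      ((-2 : ℤ) • ((br (br (br (br c (e*r)) d) s) f))) +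
      ((1 : ℤ) • ((br (br (br (br c e) (d*r)) s) f))) +
      ((-1 : ℤ) • ((br (br (br (br c e) (d*s)) r) f))) +
      ((-2 : ℤ) • ((br (br (br (br c (f*r)) d) e) s))) +
      ((2 : ℤ) • ((br (br (br (br c f) (d*r)) e) s))) +
      ((-1 : ℤ) • ((br (br (br (br c r) d) (e*f)) s))) +
      ((-1 : ℤ) • ((br (br (br (br c r) (d*s)) e) f))) +
      ((-1 : ℤ) • ((br (br (br (br c r) d) (e*s)) f))) +
      ((-1 : ℤ) • ((br (br (br (br c (f*r)) d) s) e))) +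
      ((1 : ℤ) • ((br (br (br (br c f) (d*r)) s) e))) +
      ((-2 : ℤ) • ((br (br (br (br c r) (d*s)) f) e))) +
      ((1 : ℤ) • ((br (br (br (br c (e*r)) f) d) s))) +
      ((-1 : ℤ) • ((br (br (br (br c e) (f*r)) d) s))) +
      ((-1 : ℤ) • ((br (br (br (br c e) (f*s)) d) r))) +
      ((1 : ℤ) • ((br (br (br (br c (e*r)) s) d) f))) +
      ((-1 : ℤ) • ((br (br (br (br c e) (r*s)) d) f))) +
      ((-1 : ℤ) • ((br (br (br (br c r) e) (d*f)) s))) +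
      ((-3 : ℤ) • ((br (br (br (br (br c r) s) f) e) d))) +
      ((-3 : ℤ) • ((br (br (br (br c r) (e*s)) d) f))) +
      ((1 : ℤ) • ((br (br (br (br c r) e) (d*s)) f))) +
      ((-4 : ℤ) • ((br (br (br (br c r) (f*s)) d) e))) +
      ((2 : ℤ) • ((br (br (br (br c r) f) (d*s)) e))) +
      ((-1 : ℤ) • ((br (br (br (br c (e*f)) r) s) d))) +
      ((-2 : ℤ) • ((br (br (br (br c (e*r)) f) s) d))) +
      ((1 : ℤ) • ((br (br (br (br c e) (f*r)) s) d))) +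
      ((-1 : ℤ) • ((br (br (br (br c e) (f*s)) r) d))) +
      ((-1 : ℤ) • ((br (br (br (br c (e*r)) s) f) d))) +
      ((-1 : ℤ) • ((br (br (br (br c (f*r)) e) s) d))) +
      ((1 : ℤ) • ((br (br (br (br c f) (e*r)) s) d))) := by
  simp only [br]
  noncomm_ring

theorem key_mem (h3 : IsUnit (3 : R)) {n : ℕ} {c : R} (hc : IsLNC n c) (r s d e f : R) :
    br (br d e) f * br (br c r) s ∈ lieTerm R (n + 5) := by
  apply mem_of_three_zsmul h3
  rw [key_identity]
  exact (lieTerm R (n+5)).add_mem ((lieTerm R (n+5)).add_mem ((lieTerm R (n+5)).add_mem ((lieTerm R (n+5)).add_mem ((lieTerm R (n+5)).add_mem ((lieTerm R (n+5)).add_mem ((lieTerm R (n+5)).add_mem ((lieTerm R (n+5)).add_mem ((lieTerm R (n+5)).add_mem ((lieTerm R (n+5)).add_mem ((lieTerm R (n+5)).add_mem ((lieTerm R (n+5)).add_mem ((lieTerm R (n+5)).add_mem ((lieTerm R (n+5)).add_mem ((lieTerm R (n+5)).add_mem ((lieTerm R (n+5)).add_mem ((lieTerm R (n+5)).add_mem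 ((lieTerm R (n+5)).add_mem ((lieTerm R (n+5)).add_mem ((lieTerm R (n+5)).add_mem ((lieTerm R (n+5)).add_mem ((lieTerm R (n+5)).add_mem ((lieTerm R (n+5)).add_mem ((lieTerm R (n+5)).add_mem ((lieTerm R (n+5)).add_mem ((lieTerm R (n+5)).add_mem ((lieTerm R (n+5)).add_mem ((lieTerm R (n+5)).add_mem ((lieTerm R (n+5)).add_mem ((lieTerm R (n+5)).add_mem ((lieTerm R (n+5)).add_mem ((lieTerm R (n+5)).add_mem ((lieTerm R (n+5)).add_mem ((lieTerm R (n+5)).add_mem ((lieTerm R (n+5)).add_mem ((lieTerm R (n+5)).add_mem ((lieTerm R (n+5)).add_mem ((lieTerm R (n+5)).add_mem ((lieTerm R (n+5)).add_mem ((lieTerm R (n+5)).add_mem ((lieTerm R (n+5)).add_mem ((lieTerm R (n+5)).add_mem ((lieTerm R (n+5)).add_mem ((lieTerm R (n+5)).add_mem ((lieTerm R (n+5)).add_mem ((lieTerm R (n+5)).add_mem ((lieTerm R (n+5)).add_mem ((lieTerm R (n+5)).add_mem ((lieTerm R (n+5)).add_mem ((lieTerm R (n+5)).add_mem ((lieTerm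 R (n+5)).add_mem ((lieTerm R (n+5)).add_mem ((lieTerm R (n+5)).add_mem ((lieTerm R (n+5)).add_mem ((lieTerm R (n+5)).add_mem ((lieTerm R (n+5)).add_mem ((lieTerm R (n+5)).add_mem ((lieTerm R (n+5)).add_mem ((lieTerm R (n+5)).add_mem ((lieTerm R (n+5)).add_mem ((lieTerm R (n+5)).add_mem ((lieTerm R (n+5)).add_mem ((lieTerm R (n+5)).add_mem ((lieTerm R (n+5)).add_mem ((lieTerm R (n+5)).add_mem ((lieTerm R (n+5)).add_mem ((lieTerm R (n+5)).add_mem ((lieTerm R (n+5)).add_mem ((lieTerm R (n+5)).add_mem ((lieTerm R (n+5)).add_mem ((lieTerm R (n+5)).add_mem ((lieTerm R (n+5)).add_mem ((lieTerm R (n+5)).add_mem ((lieTerm R (n+5)).add_mem ((lieTerm R (n+5)).add_mem ((lieTerm R (n+5)).add_mem ((lieTerm R (n+5)).add_mem ((lieTerm R (n+5)).add_mem ((lieTerm R (n+5)).add_mem ((lieTerm R (n+5)).add_mem ((lieTerm R (n+5)).add_mem ((lieTerm R (n+5)).add_mem ((lieTerm R (n+5)).add_mem ((lieTerm R (n+5)).add_mem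 ((lieTerm R (n+5)).add_mem ((lieTerm R (n+5)).add_mem ((lieTerm R (n+5)).add_mem ((lieTerm R (n+5)).add_mem ((lieTerm R (n+5)).add_mem ((lieTerm R (n+5)).add_mem ((lieTerm R (n+5)).add_mem ((lieTerm R (n+5)).add_mem ((lieTerm R (n+5)).add_mem ((lieTerm R (n+5)).add_mem ((lieTerm R (n+5)).add_mem ((lieTerm R (n+5)).add_mem ((lieTerm R (n+5)).add_mem ((lieTerm R (n+5)).add_mem ((lieTerm R (n+5)).add_mem ((lieTerm R (n+5)).add_mem ((lieTerm R (n+5)).add_mem ((lieTerm R (n+5)).add_mem ((lieTerm R (n+5)).add_mem ((lieTerm R (n+5)).add_mem ((lieTerm R (n+5)).add_mem ((lieTerm R (n+5)).add_mem ((lieTerm R (n+5)).add_mem ((lieTerm R (n+5)).add_mem ((lieTerm R (n+5)).add_mem ((lieTerm R (n+5)).add_mem ((lieTerm R (n+5)).add_mem ((lieTerm R (n+5)).add_mem ((lieTerm R (n+5)).add_mem ((lieTerm R (n+5)).add_mem ((lieTerm R (n+5)).add_mem ((lieTerm R (n+5)).add_mem ((lieTerm R (n+5)).add_mem ((lieTerm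 R (n+5)).add_mem ((lieTerm R (n+5)).add_mem ((lieTerm R (n+5)).add_mem ((lieTerm R (n+5)).add_mem ((lieTerm R (n+5)).add_mem ((lieTerm R (n+5)).add_mem ((lieTerm R (n+5)).add_mem ((lieTerm R (n+5)).add_mem ((lieTerm R (n+5)).add_mem ((lieTerm R (n+5)).add_mem ((lieTerm R (n+5)).add_mem ((lieTerm R (n+5)).add_mem ((lieTerm R (n+5)).add_mem ((lieTerm R (n+5)).add_mem ((lieTerm R (n+5)).add_mem ((lieTerm R (n+5)).add_mem ((lieTerm R (n+5)).add_mem ((lieTerm R (n+5)).add_mem ((lieTerm R (n+5)).add_mem ((lieTerm R (n+5)).add_mem ((lieTerm R (n+5)).add_mem ((lieTerm R (n+5)).add_mem ((lieTerm R (n+5)).add_mem ((lieTerm R (n+5)).add_mem ((lieTerm R (n+5)).add_mem ((lieTerm R (n+5)).add_mem ((lieTerm R (n+5)).add_mem ((lieTerm R (n+5)).add_mem ((lieTerm R (n+5)).add_mem ((lieTerm R (n+5)).add_mem ((lieTerm R (n+5)).add_mem ((lieTerm R (n+5)).zsmul_mem (-1 : ℤ) (mem_app5 hc d s e r f))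
      ((lieTerm R (n+5)).zsmul_mem (1 : ℤ) (mem_app5 hc d r f e s)))
      ((lieTerm R (n+5)).zsmul_mem (-1 : ℤ) (mem_app5 hc d f e r s)))
      ((lieTerm R (n+5)).zsmul_mem (1 : ℤ) (mem_app5 hc d r e s f)))
      ((lieTerm R (n+5)).zsmul_mem (-1 : ℤ) (mem_app5 hc d s f r e)))
      ((lieTerm R (n+5)).zsmul_mem (-4 : ℤ) (mem_app5 hc r s d e f)))
      ((lieTerm R (n+5)).zsmul_mem (1 : ℤ) (mem_app5 hc e d f r s)))
      ((lieTerm R (n+5)).zsmul_mem (-1 : ℤ) (mem_app5 hc e d f s r)))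
      ((lieTerm R (n+5)).zsmul_mem (1 : ℤ) (mem_app5 hc e d s r f)))
      ((lieTerm R (n+5)).zsmul_mem (-2 : ℤ) (mem_app5 hc e d r s f)))
      ((lieTerm R (n+5)).zsmul_mem (-1 : ℤ) (mem_app5 hc d s r e f)))
      ((lieTerm R (n+5)).zsmul_mem (1 : ℤ) (mem_app5 hc e r d s f)))
      ((lieTerm R (n+5)).zsmul_mem (-1 : ℤ) (mem_app5 hc d s f e r)))
      ((lieTerm R (n+5)).zsmul_mem (-2 : ℤ) (mem_app5 hc r d f e s)))
      ((lieTerm R (n+5)).zsmul_mem (-2 : ℤ) (mem_app5 hc r d f s e)))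
      ((lieTerm R (n+5)).zsmul_mem (1 : ℤ) (mem_app5 hc d r f s e)))
      ((lieTerm R (n+5)).zsmul_mem (-1 : ℤ) (mem_app5 hc r d s f e)))
      ((lieTerm R (n+5)).zsmul_mem (-1 : ℤ) (mem_app5 hc r e d f s)))
      ((lieTerm R (n+5)).zsmul_mem (-1 : ℤ) (mem_app5 hc e d r f s)))
      ((lieTerm R (n+5)).zsmul_mem (-2 : ℤ) (mem_app5 hc r e d s f)))
      ((lieTerm R (n+5)).zsmul_mem (2 : ℤ) (mem_app5 hc f r d e s)))
      ((lieTerm R (n+5)).zsmul_mem (-2 : ℤ) (mem_app5 hc r f d e s)))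
      ((lieTerm R (n+5)).zsmul_mem (-1 : ℤ) (mem_app5 hc e f d r s)))
      ((lieTerm R (n+5)).zsmul_mem (-2 : ℤ) (mem_app5 hc r s d f e)))
      ((lieTerm R (n+5)).zsmul_mem (1 : ℤ) (mem_app5 hc f r d s e)))
      ((lieTerm R (n+5)).zsmul_mem (-1 : ℤ) (mem_app5 hc e s r d f)))
      ((lieTerm R (n+5)).zsmul_mem (-1 : ℤ) (mem_app5 hc e s d r f)))
      ((lieTerm R (n+5)).zsmul_mem (-2 : ℤ) (mem_app5 hc f d r e s)))
      ((lieTerm R (n+5)).zsmul_mem (-1 : ℤ) (mem_app5 hc r f d s e)))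
      ((lieTerm R (n+5)).zsmul_mem (1 : ℤ) (mem_app5 hc e r f s d)))
      ((lieTerm R (n+5)).zsmul_mem (2 : ℤ) (mem_app5 hc r f s d e)))
      ((lieTerm R (n+5)).zsmul_mem (-1 : ℤ) (mem_app5 hc e r f d s)))
      ((lieTerm R (n+5)).zsmul_mem (-1 : ℤ) (mem_app5 hc e s f r d)))
      ((lieTerm R (n+5)).zsmul_mem (-1 : ℤ) (mem_app5 hc e s f d r)))
      ((lieTerm R (n+5)).zsmul_mem (-1 : ℤ) (mem_app5 hc r s f d e)))
      ((lieTerm R (n+5)).zsmul_mem (1 : ℤ) (mem_app5 hc f r e s d)))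
      ((lieTerm R (n+5)).zsmul_mem (-1 : ℤ) (mem_app5 hc f e r s d)))
      ((lieTerm R (n+5)).zsmul_mem (2 : ℤ) (mem_app5 hc r e s d f)))
      ((lieTerm R (n+5)).zsmul_mem (-1 : ℤ) (mem_app5 hc r f e s d)))
      ((lieTerm R (n+5)).zsmul_mem (1 : ℤ) ((lieTerm R (n+5)).mul_mem_right _ (s) (mem_app4 hc e f r d))))
      ((lieTerm R (n+5)).zsmul_mem (1 : ℤ) ((lieTerm R (n+5)).mul_mem_right _ (s) (mem_app4 hc e f d r))))
      ((lieTerm R (n+5)).zsmul_mem (-2 : ℤ) (mem_app5 hc r e f s d)))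
      ((lieTerm R (n+5)).zsmul_mem (1 : ℤ) ((lieTerm R (n+5)).mul_mem_right _ (s) (mem_app4 hc d e r f))))
      ((lieTerm R (n+5)).zsmul_mem (1 : ℤ) ((lieTerm R (n+5)).mul_mem_right _ (s) (mem_app4 hc d f e r))))
      ((lieTerm R (n+5)).zsmul_mem (1 : ℤ) ((lieTerm R (n+5)).mul_mem_right _ (s) (mem_app4 hc d f r e))))
      ((lieTerm R (n+5)).zsmul_mem (2 : ℤ) ((lieTerm R (n+5)).mul_mem_right _ (s) (mem_app4 hc r e d f))))
      ((lieTerm R (n+5)).zsmul_mem (1 : ℤ) ((lieTerm R (n+5)).mul_mem_right _ (s) (mem_app4 hc d r e f))))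
      ((lieTerm R (n+5)).zsmul_mem (1 : ℤ) ((lieTerm R (n+5)).mul_mem_right _ (s) (mem_app4 hc e r d f))))
      ((lieTerm R (n+5)).zsmul_mem (1 : ℤ) ((lieTerm R (n+5)).mul_mem_right _ (s) (mem_app4 hc e d r f))))
      ((lieTerm R (n+5)).zsmul_mem (2 : ℤ) ((lieTerm R (n+5)).mul_mem_right _ (s) (mem_app4 hc r d f e))))
      ((lieTerm R (n+5)).zsmul_mem (2 : ℤ) ((lieTerm R (n+5)).mul_mem_right _ (s) (mem_app4 hc r f d e))))
      ((lieTerm R (n+5)).zsmul_mem (1 : ℤ) ((lieTerm R (n+5)).mul_mem_right _ (r) (mem_app4 hc d e s f))))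
      ((lieTerm R (n+5)).zsmul_mem (1 : ℤ) ((lieTerm R (n+5)).mul_mem_right _ (r) (mem_app4 hc d e f s))))
      ((lieTerm R (n+5)).zsmul_mem (1 : ℤ) ((lieTerm R (n+5)).mul_mem_right _ (r) (mem_app4 hc d f s e))))
      ((lieTerm R (n+5)).zsmul_mem (1 : ℤ) ((lieTerm R (n+5)).mul_mem_right _ (r) (mem_app4 hc d s f e))))
      ((lieTerm R (n+5)).zsmul_mem (1 : ℤ) ((lieTerm R (n+5)).mul_mem_right _ (r) (mem_app4 hc e d f s))))
      ((lieTerm R (n+5)).zsmul_mem (1 : ℤ) ((lieTerm R (n+5)).mul_mem_right _ (r) (mem_app4 hc e f s d))))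
      ((lieTerm R (n+5)).zsmul_mem (1 : ℤ) ((lieTerm R (n+5)).mul_mem_right _ (f) (mem_app4 hc d r e s))))
      ((lieTerm R (n+5)).zsmul_mem (1 : ℤ) ((lieTerm R (n+5)).mul_mem_right _ (f) (mem_app4 hc d e r s))))
      ((lieTerm R (n+5)).zsmul_mem (1 : ℤ) ((lieTerm R (n+5)).mul_mem_right _ (f) (mem_app4 hc d s e r))))
      ((lieTerm R (n+5)).zsmul_mem (1 : ℤ) ((lieTerm R (n+5)).mul_mem_right _ (f) (mem_app4 hc d s r e))))
      ((lieTerm R (n+5)).zsmul_mem (1 : ℤ) ((lieTerm R (n+5)).mul_mem_right _ (f) (mem_app4 hc e d r s))))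
      ((lieTerm R (n+5)).zsmul_mem (3 : ℤ) ((lieTerm R (n+5)).mul_mem_right _ (f) (mem_app4 hc r d e s))))
      ((lieTerm R (n+5)).zsmul_mem (1 : ℤ) ((lieTerm R (n+5)).mul_mem_right _ (f) (mem_app4 hc r d s e))))
      ((lieTerm R (n+5)).zsmul_mem (1 : ℤ) ((lieTerm R (n+5)).mul_mem_right _ (f) (mem_app4 hc r e d s))))
      ((lieTerm R (n+5)).zsmul_mem (1 : ℤ) ((lieTerm R (n+5)).mul_mem_right _ (f) (mem_app4 hc e r d s))))
      ((lieTerm R (n+5)).zsmul_mem (4 : ℤ) ((lieTerm R (n+5)).mul_mem_right _ (f) (mem_app4 hc r s d e))))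
      ((lieTerm R (n+5)).zsmul_mem (1 : ℤ) ((lieTerm R (n+5)).mul_mem_right _ (f) (mem_app4 hc e s d r))))
      ((lieTerm R (n+5)).zsmul_mem (1 : ℤ) ((lieTerm R (n+5)).mul_mem_right _ (f) (mem_app4 hc e s r d))))
      ((lieTerm R (n+5)).zsmul_mem (2 : ℤ) ((lieTerm R (n+5)).mul_mem_right _ (e) (mem_app4 hc r d f s))))
      ((lieTerm R (n+5)).zsmul_mem (1 : ℤ) ((lieTerm R (n+5)).mul_mem_right _ (e) (mem_app4 hc d r f s))))
      ((lieTerm R (n+5)).zsmul_mem (1 : ℤ) ((lieTerm R (n+5)).mul_mem_right _ (e) (mem_app4 hc d f s r))))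
      ((lieTerm R (n+5)).zsmul_mem (1 : ℤ) ((lieTerm R (n+5)).mul_mem_right _ (e) (mem_app4 hc d s f r))))
      ((lieTerm R (n+5)).zsmul_mem (1 : ℤ) ((lieTerm R (n+5)).mul_mem_right _ (e) (mem_app4 hc d r s f))))
      ((lieTerm R (n+5)).zsmul_mem (3 : ℤ) ((lieTerm R (n+5)).mul_mem_right _ (e) (mem_app4 hc r d s f))))
      ((lieTerm R (n+5)).zsmul_mem (1 : ℤ) ((lieTerm R (n+5)).mul_mem_right _ (e) (mem_app4 hc r s f d))))
      ((lieTerm R (n+5)).zsmul_mem (-1 : ℤ) ((lieTerm R (n+5)).mul_mem_right _ (e) (mem_app4 hc r f d s))))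
      ((lieTerm R (n+5)).zsmul_mem (2 : ℤ) ((lieTerm R (n+5)).mul_mem_right _ (e) (mem_app4 hc r s d f))))
      ((lieTerm R (n+5)).zsmul_mem (2 : ℤ) ((lieTerm R (n+5)).mul_mem_right _ (e) (mem_app4 hc r f s d))))
      ((lieTerm R (n+5)).zsmul_mem (1 : ℤ) ((lieTerm R (n+5)).mul_mem_right _ (d) (mem_app4 hc e r s f))))
      ((lieTerm R (n+5)).zsmul_mem (1 : ℤ) ((lieTerm R (n+5)).mul_mem_right _ (r) (mem_app4 hc e s f d))))
      ((lieTerm R (n+5)).zsmul_mem (1 : ℤ) ((lieTerm R (n+5)).mul_mem_right _ (d) (mem_app4 hc e f s r))))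
      ((lieTerm R (n+5)).zsmul_mem (1 : ℤ) ((lieTerm R (n+5)).mul_mem_right _ (f) (mem_app4 hc r e s d))))
      ((lieTerm R (n+5)).zsmul_mem (-1 : ℤ) (mem_app5 hc f d r s e)))
      ((lieTerm R (n+5)).zsmul_mem (1 : ℤ) ((lieTerm R (n+5)).mul_mem_right _ (d) (mem_app4 hc e r f s))))
      ((lieTerm R (n+5)).zsmul_mem (1 : ℤ) ((lieTerm R (n+5)).mul_mem_right _ (d) (mem_app4 hc e s f r))))
      ((lieTerm R (n+5)).zsmul_mem (1 : ℤ) ((lieTerm R (n+5)).mul_mem_right _ (d) (mem_app4 hc r e s f))))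
      ((lieTerm R (n+5)).zsmul_mem (-1 : ℤ) (mem_app5 hc r e s f d)))
      ((lieTerm R (n+5)).zsmul_mem (2 : ℤ) ((lieTerm R (n+5)).mul_mem_right _ (d) (mem_app4 hc r e f s))))
      ((lieTerm R (n+5)).zsmul_mem (1 : ℤ) ((lieTerm R (n+5)).mul_mem_right _ (d) (mem_app4 hc r f e s))))
      ((lieTerm R (n+5)).zsmul_mem (3 : ℤ) ((lieTerm R (n+5)).mul_mem_right _ (d) (mem_app4 hc r s f e))))
      ((lieTerm R (n+5)).zsmul_mem (1 : ℤ) (mem_app4 hc (d*e) f r s)))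
      ((lieTerm R (n+5)).zsmul_mem (-1 : ℤ) (mem_app4 hc (d*e) f s r)))
      ((lieTerm R (n+5)).zsmul_mem (-1 : ℤ) (mem_app4 hc (d*e) r f s)))
      ((lieTerm R (n+5)).zsmul_mem (-1 : ℤ) (mem_app4 hc (d*e) s f r)))
      ((lieTerm R (n+5)).zsmul_mem (-1 : ℤ) (mem_app5 hc e d s f r)))
      ((lieTerm R (n+5)).zsmul_mem (1 : ℤ) ((lieTerm R (n+5)).mul_mem_right _ (r) (mem_app4 hc e d s f))))
      ((lieTerm R (n+5)).zsmul_mem (-2 : ℤ) (mem_app4 hc (d*e) r s f)))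
      ((lieTerm R (n+5)).zsmul_mem (1 : ℤ) (mem_app4 hc (d*e) s r f)))
      ((lieTerm R (n+5)).zsmul_mem (-1 : ℤ) (mem_app4 hc d (e*f) r s)))
      ((lieTerm R (n+5)).zsmul_mem (-1 : ℤ) (mem_app4 hc (d*r) e f s)))
      ((lieTerm R (n+5)).zsmul_mem (-1 : ℤ) (mem_app5 hc r d e f s)))
      ((lieTerm R (n+5)).zsmul_mem (2 : ℤ) ((lieTerm R (n+5)).mul_mem_right _ (s) (mem_app4 hc r d e f))))
      ((lieTerm R (n+5)).zsmul_mem (-2 : ℤ) (mem_app4 hc (d*r) e s f)))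
      ((lieTerm R (n+5)).zsmul_mem (-2 : ℤ) (mem_app5 hc r d e s f)))
      ((lieTerm R (n+5)).zsmul_mem (1 : ℤ) (mem_app4 hc d (e*r) s f)))
      ((lieTerm R (n+5)).zsmul_mem (-1 : ℤ) (mem_app4 hc d (e*s) r f)))
      ((lieTerm R (n+5)).zsmul_mem (-2 : ℤ) (mem_app4 hc (d*f) r e s)))
      ((lieTerm R (n+5)).zsmul_mem (-1 : ℤ) (mem_app4 hc (d*r) f e s)))
      ((lieTerm R (n+5)).zsmul_mem (1 : ℤ) (mem_app4 hc d (f*r) e s)))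
      ((lieTerm R (n+5)).zsmul_mem (-1 : ℤ) (mem_app4 hc d (f*s) e r)))
      ((lieTerm R (n+5)).zsmul_mem (1 : ℤ) (mem_app4 hc (d*r) s e f)))
      ((lieTerm R (n+5)).zsmul_mem (-1 : ℤ) (mem_app4 hc d (r*s) e f)))
      ((lieTerm R (n+5)).zsmul_mem (-1 : ℤ) (mem_app4 hc (d*f) r s e)))
      ((lieTerm R (n+5)).zsmul_mem (-2 : ℤ) (mem_app4 hc (d*r) f s e)))
      ((lieTerm R (n+5)).zsmul_mem (1 : ℤ) (mem_app4 hc d (f*r) s e)))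
      ((lieTerm R (n+5)).zsmul_mem (-1 : ℤ) (mem_app4 hc (d*r) s f e)))
      ((lieTerm R (n+5)).zsmul_mem (-1 : ℤ) (mem_app4 hc d (f*s) r e)))
      ((lieTerm R (n+5)).zsmul_mem (-1 : ℤ) (mem_app4 hc e (d*f) r s)))
      ((lieTerm R (n+5)).zsmul_mem (-1 : ℤ) (mem_app4 hc (e*r) d f s)))
      ((lieTerm R (n+5)).zsmul_mem (-2 : ℤ) (mem_app4 hc (e*r) d s f)))
      ((lieTerm R (n+5)).zsmul_mem (1 : ℤ) (mem_app4 hc e (d*r) s f)))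
      ((lieTerm R (n+5)).zsmul_mem (-1 : ℤ) (mem_app4 hc e (d*s) r f)))
      ((lieTerm R (n+5)).zsmul_mem (-2 : ℤ) (mem_app4 hc (f*r) d e s)))
      ((lieTerm R (n+5)).zsmul_mem (2 : ℤ) (mem_app4 hc f (d*r) e s)))
      ((lieTerm R (n+5)).zsmul_mem (-1 : ℤ) (mem_app4 hc r d (e*f) s)))
      ((lieTerm R (n+5)).zsmul_mem (-1 : ℤ) (mem_app4 hc r (d*s) e f)))
      ((lieTerm R (n+5)).zsmul_mem (-1 : ℤ) (mem_app4 hc r d (e*s) f)))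
      ((lieTerm R (n+5)).zsmul_mem (-1 : ℤ) (mem_app4 hc (f*r) d s e)))
      ((lieTerm R (n+5)).zsmul_mem (1 : ℤ) (mem_app4 hc f (d*r) s e)))
      ((lieTerm R (n+5)).zsmul_mem (-2 : ℤ) (mem_app4 hc r (d*s) f e)))
      ((lieTerm R (n+5)).zsmul_mem (1 : ℤ) (mem_app4 hc (e*r) f d s)))
      ((lieTerm R (n+5)).zsmul_mem (-1 : ℤ) (mem_app4 hc e (f*r) d s)))
      ((lieTerm R (n+5)).zsmul_mem (-1 : ℤ) (mem_app4 hc e (f*s) d r)))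
      ((lieTerm R (n+5)).zsmul_mem (1 : ℤ) (mem_app4 hc (e*r) s d f)))
      ((lieTerm R (n+5)).zsmul_mem (-1 : ℤ) (mem_app4 hc e (r*s) d f)))
      ((lieTerm R (n+5)).zsmul_mem (-1 : ℤ) (mem_app4 hc r e (d*f) s)))
      ((lieTerm R (n+5)).zsmul_mem (-3 : ℤ) (mem_app5 hc r s f e d)))
      ((lieTerm R (n+5)).zsmul_mem (-3 : ℤ) (mem_app4 hc r (e*s) d f)))
      ((lieTerm R (n+5)).zsmul_mem (1 : ℤ) (mem_app4 hc r e (d*s) f)))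
      ((lieTerm R (n+5)).zsmul_mem (-4 : ℤ) (mem_app4 hc r (f*s) d e)))
      ((lieTerm R (n+5)).zsmul_mem (2 : ℤ) (mem_app4 hc r f (d*s) e)))
      ((lieTerm R (n+5)).zsmul_mem (-1 : ℤ) (mem_app4 hc (e*f) r s d)))
      ((lieTerm R (n+5)).zsmul_mem (-2 : ℤ) (mem_app4 hc (e*r) f s d)))
      ((lieTerm R (n+5)).zsmul_mem (1 : ℤ) (mem_app4 hc e (f*r) s d)))
      ((lieTerm R (n+5)).zsmul_mem (-1 : ℤ) (mem_app4 hc e (f*s) r d)))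
      ((lieTerm R (n+5)).zsmul_mem (-1 : ℤ) (mem_app4 hc (e*r) s f d)))
      ((lieTerm R (n+5)).zsmul_mem (-1 : ℤ) (mem_app4 hc (f*r) e s d)))
      ((lieTerm R (n+5)).zsmul_mem (1 : ℤ) (mem_app4 hc f (e*r) s d))

lemma leftNormedLie_concat (x : R) (t : List R) (y : R) :
    leftNormedLie x (t ++ [y]) = br (leftNormedLie x t) y := by
  simp [leftNormedLie, List.foldl_append, br]

/-- main commutator lemma: a class-3 bracket times a weight-`2m+1` left-normed
commutator lies in `lieTerm R (2m+3)`. -/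
theorem P3 (h3 : IsUnit (3 : R)) {m : ℕ} {c : R} (hc : IsLNC (2 * m) c) (d e f : R) :
    br (br d e) f * c ∈ lieTerm R (2 * m + 3) := by
  match m, hc with
  | 0, hc =>
    have h1 : IsLNC 2 (br (br d e) f) := by
      have := ((isLNC_zero d).brr e).brr f
      simpa using this
    have h2 := h1.mem
    have e3 : (2 : ℕ) + 1 = 3 := by omega
    rw [e3] at h2
    have e4 : 2 * 0 + 3 = 3 := by omega
    rw [e4]
    exact (lieTerm R 3).mul_mem_right _ c h2
  | (m + 1), hc =>
    obtain ⟨x, l, hl, rfl⟩ := hc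
    rcases l.eq_nil_or_concat with rfl | ⟨t1, s1, rfl⟩
    · simp at hl
    rcases t1.eq_nil_or_concat with rfl | ⟨t2, r1, rfl⟩
    · simp at hl; omega
    have hc0 : IsLNC (2 * m) (leftNormedLie x t2) := by
      refine ⟨x, t2, ?_, rfl⟩
      simp at hl; omega
    have key := key_mem h3 hc0 r1 s1 d e f
    have e5 : 2 * m + 5 = 2 * (m + 1) + 3 := by omega
    rw [e5] at key
    rwa [show (t2.concat r1).concat s1 = (t2 ++ [r1]) ++ [s1] by simp,
      leftNormedLie_concat, leftNormedLie_concat]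

/-- ideal version. -/
theorem P3' (h3 : IsUnit (3 : R)) {m : ℕ} {w : R} (hw : w ∈ lieTerm R (2 * m + 1))
    (d e f : R) : br (br d e) f * w ∈ lieTerm R (2 * m + 3) := by
  match m with
  | 0 =>
    have h1 : IsLNC 2 (br (br d e) f) := by
      have := ((isLNC_zero d).brr e).brr f
      simpa using this
    have h2 := h1.mem
    have e3 : (2 : ℕ) + 1 = 3 := by omega
    rw [e3] at h2
    exact (lieTerm R (2 * 0 + 3)).mul_mem_right _ w (by simpa using h2)
  | (m + 1) =>
    set N := 2 * (m + 1) + 3 with hN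
    let carrier : Set R := {w | ∀ d e f : R, br (br d e) f * w ∈ lieTerm R N}
    have hzero : (0 : R) ∈ carrier := by
      intro d e f
      rw [mul_zero]
      exact (lieTerm R N).zero_mem
    have hadd : ∀ {x y : R}, x ∈ carrier → y ∈ carrier → x + y ∈ carrier := by
      intro x y hx hy d e f
      rw [mul_add]
      exact (lieTerm R N).add_mem (hx d e f) (hy d e f)
    have hneg : ∀ {x : R}, x ∈ carrier → -x ∈ carrier := by
      intro x hx d e f
      rw [mul_neg]
      exact (lieTerm R N).neg_mem (hx d e f)
    have hml : ∀ {x y : R}, y ∈ carrier → x * y ∈ carrier := by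
      intro x y hy d e f
      have eq1 : br (br d e) f * (x * y)
          = x * (br (br d e) f * y) + br (br (br d e) f) x * y := by
        simp only [br]; noncomm_ring
      rw [eq1]
      exact (lieTerm R N).add_mem ((lieTerm R N).mul_mem_left _ _ (hy d e f))
        (hy (br d e) f x)
    have hmr : ∀ {x y : R}, x ∈ carrier → x * y ∈ carrier := by
      intro x y hx d e f
      rw [← mul_assoc]
      exact (lieTerm R N).mul_mem_right _ y (hx d e f)
    let J : TwoSidedIdeal R := TwoSidedIdeal.mk' carrier hzero hadd hneg hml hmr
    have hw' : w ∈ TwoSidedIdeal.span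
        {r : R | ∃ (x : R) (l : List R), l.length = (2 * (m + 1) + 1) - 1 ∧
          r = leftNormedLie x l} := by
      unfold lieTerm at hw
      rw [if_neg (by omega)] at hw
      exact hw
    have hsub : {r : R | ∃ (x : R) (l : List R), l.length = (2 * (m + 1) + 1) - 1 ∧
        r = leftNormedLie x l} ⊆ (J : Set R) := by
      rintro g ⟨x, l, hl, rfl⟩
      have hg : IsLNC (2 * (m + 1)) (leftNormedLie x l) := ⟨x, l, by omega, rfl⟩
      have : ∀ d e f : R, br (br d e) f * leftNormedLie x l ∈ lieTerm R N := by
        intro d e f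
        exact P3 h3 hg d e f
      exact (TwoSidedIdeal.mem_mk' _ _ _ _ _ _ _).mpr this
    have hmem' := TwoSidedIdeal.mem_span_iff.mp hw' J hsub
    have hres := (TwoSidedIdeal.mem_mk' _ _ _ _ _ _ w).mp hmem'
    exact hres d e f

/-- `lieTerm R 3 * lieTerm R (2m+1) ⊆ lieTerm R (2m+3)`. -/
theorem T3mul (h3 : IsUnit (3 : R)) {m : ℕ} {a w : R} (ha : a ∈ lieTerm R 3)
    (hw : w ∈ lieTerm R (2 * m + 1)) : a * w ∈ lieTerm R (2 * m + 3) := by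
  let carrier : Set R :=
    {a | ∀ w : R, w ∈ lieTerm R (2 * m + 1) → a * w ∈ lieTerm R (2 * m + 3)}
  have hzero : (0 : R) ∈ carrier := by
    intro w hw
    rw [zero_mul]
    exact (lieTerm R _).zero_mem
  have hadd : ∀ {x y : R}, x ∈ carrier → y ∈ carrier → x + y ∈ carrier := by
    intro x y hx hy w hw
    rw [add_mul]
    exact (lieTerm R _).add_mem (hx w hw) (hy w hw)
  have hneg : ∀ {x : R}, x ∈ carrier → -x ∈ carrier := by
    intro x hx w hw
    rw [neg_mul]
    exact (lieTerm R _).neg_mem (hx w hw)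
  have hml : ∀ {x y : R}, y ∈ carrier → x * y ∈ carrier := by
    intro x y hy w hw
    rw [mul_assoc]
    exact (lieTerm R _).mul_mem_left _ _ (hy w hw)
  have hmr : ∀ {x y : R}, x ∈ carrier → x * y ∈ carrier := by
    intro x y hx w hw
    rw [mul_assoc]
    exact hx (y * w) ((lieTerm R _).mul_mem_left _ _ hw)
  let J : TwoSidedIdeal R := TwoSidedIdeal.mk' carrier hzero hadd hneg hml hmr
  have ha' : a ∈ TwoSidedIdeal.span
      {r : R | ∃ (x : R) (l : List R), l.length = 3 - 1 ∧ r = leftNormedLie x l} := by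
    unfold lieTerm at ha
    rw [if_neg (by omega)] at ha
    exact ha
  have hsub : {r : R | ∃ (x : R) (l : List R), l.length = 3 - 1 ∧ r = leftNormedLie x l}
      ⊆ (J : Set R) := by
    rintro g ⟨x, l, hl, rfl⟩
    match l, hl with
    | [u, v], _ =>
      have heq : leftNormedLie x [u, v] = br (br x u) v := rfl
      have : ∀ w : R, w ∈ lieTerm R (2 * m + 1) →
          leftNormedLie x [u, v] * w ∈ lieTerm R (2 * m + 3) := by
        intro w hw
        rw [heq]
        exact P3' h3 hw x u v
      exact (TwoSidedIdeal.mem_mk' _ _ _ _ _ _ _).mpr this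
  have := TwoSidedIdeal.mem_span_iff.mp ha' J hsub
  have hres := (TwoSidedIdeal.mem_mk' _ _ _ _ _ _ a).mp this
  exact hres w hw

theorem main_aux (h3 : IsUnit (3 : R)) :
    ∀ l : List R, l ≠ [] → (∀ x ∈ l, x ∈ lieTerm R 3) →
      l.prod ∈ lieTerm R (2 * l.length + 1) := by
  intro l
  induction l with
  | nil => intro h; exact absurd rfl h
  | cons a t ih =>
    intro _ hmem
    have ha := hmem a List.mem_cons_self
    cases t with
    | nil =>
      simpa using ha
    | cons b t' =>
      have hw := ih (by simp) (fun x hx => hmem x (List.mem_cons_of_mem a hx))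
      have := T3mul h3 ha hw
      have e1 : 2 * (b :: t').length + 3 = 2 * (a :: b :: t').length + 1 := by
        simp; omega
      rw [e1] at this
      simpa [List.prod_cons] using this

end LieNilAux

/-- If `3` is a unit of `R` and `k ≥ 1`, every product of `k` elements of `R^[3]`
lies in `R^[2k+1]`. -/
theorem prod_lieTerm_three_pow_of_isUnit_three
    (R : Type*) [Ring R] (h3 : IsUnit (3 : R)) (k : ℕ) (hk : 1 ≤ k) (l : List R)
    (hlen : l.length = k) (hmem : ∀ x ∈ l, x ∈ lieTerm R 3) :
    l.prod ∈ lieTerm R (2 * k + 1) := by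
  subst hlen
  have hne : l ≠ [] := by
    intro h
    rw [h] at hk
    simp at hk
  exact LieNilAux.main_aux h3 l hne hmem
end

section
/- Let R be an associative ring with identity and let x, y be units of R. Then the following identity holds: (x,y,y) − 1 = (x,y)^{−1} y^{−1} ( x^{−1}y^{−1}[x,y,y] + x^{−1}[x,y][x,y,x^{−1}y^{−1}] − x^{−1}[x,y]^2 x^{−1}y^{−1} ). -/

lemma key_group_comm_aux {R : Type*} [Ring R] (u v a b : R)
    (hua : u * a = 1) (hau : a * u = 1) (hvb : v * b = 1) (hbv : b * v = 1) :
    (b * a * v * u) * b * (a * b * u * v) * v - 1 =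
      (b * a * v * u) * b *
        (a * b * ((u * v - v * u) * v - v * (u * v - v * u)) +
          a * (u * v - v * u) *
            ((u * v - v * u) * (a * b) - (a * b) * (u * v - v * u)) -
          a * (u * v - v * u) ^ 2 * a * b) := by
  have h1 : ∀ t : R, u * (a * t) = t := fun t => by rw [← mul_assoc, hua, one_mul]
  have h2 : ∀ t : R, a * (u * t) = t := fun t => by rw [← mul_assoc, hau, one_mul]
  have h3 : ∀ t : R, v * (b * t) = t := fun t => by rw [← mul_assoc, hvb, one_mul]
  have h4 : ∀ t : R, b * (v * t) = t := fun t => by rw [← mul_assoc, hbv, one_mul]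
  simp only [pow_two, mul_sub, sub_mul, mul_add, add_mul, mul_one, one_mul, mul_assoc,
    h1, h2, h3, h4, hua, hau, hvb, hbv]
  abel

/-- For units `x, y` of `R`, with `(x,y) = x⁻¹y⁻¹xy`, `(x,y,y) = ((x,y),y)` and
`[a,b] = ab - ba`, one has
`(x,y,y) - 1 = (x,y)⁻¹ y⁻¹ (x⁻¹y⁻¹[x,y,y] + x⁻¹[x,y][x,y,x⁻¹y⁻¹] - x⁻¹[x,y]² x⁻¹y⁻¹)`. -/
theorem group_comm_three_sub_one_identity
    (R : Type*) [Ring R] (x y : Rˣ) :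
    ((((x⁻¹ * y⁻¹ * x * y)⁻¹ * y⁻¹ * (x⁻¹ * y⁻¹ * x * y) * y : Rˣ) : R) - 1) =
      (((x⁻¹ * y⁻¹ * x * y)⁻¹ : Rˣ) : R) * ((y⁻¹ : Rˣ) : R) *
        (((x⁻¹ : Rˣ) : R) * ((y⁻¹ : Rˣ) : R) *
            ((((x : R) * y - (y : R) * x) * y) - (y : R) * ((x : R) * y - (y : R) * x)) +
          ((x⁻¹ : Rˣ) : R) * ((x : R) * y - (y : R) * x) *
            (((x : R) * y - (y : R) * x) * (((x⁻¹ : Rˣ) : R) * ((y⁻¹ : Rˣ) : R)) -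
              (((x⁻¹ : Rˣ) : R) * ((y⁻¹ : Rˣ) : R)) * ((x : R) * y - (y : R) * x)) -
          ((x⁻¹ : Rˣ) : R) * ((x : R) * y - (y : R) * x) ^ 2 *
            ((x⁻¹ : Rˣ) : R) * ((y⁻¹ : Rˣ) : R)) := by
  have := key_group_comm_aux (R := R) (↑x) (↑y) (↑x⁻¹) (↑y⁻¹)
    (by simp) (by simp) (by simp) (by simp)
  simpa [Units.val_mul, mul_inv_rev, inv_inv, mul_assoc, mul_add, mul_sub, add_mul, sub_mul]
    using this
end

section
/- Let R be an associative ring with identity and let m, n ≥ 1. Then R^[m]·R^[n] ⊆ R^[m+n−2], i.e. the product of any element of R^[m] with any element of R^[n] lies in R^[m+n−2]. -/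
/-! ### Auxiliary lemmas (Gupta–Levin theorem) -/

section GuptaLevinAux

variable {R : Type*} [Ring R]

/-- `IsC j c` : `c` is a left-normed Lie commutator of weight `j + 1`. -/
def IsC (j : ℕ) (c : R) : Prop :=
  ∃ (x : R) (l : List R), l.length = j ∧ c = leftNormedLie x l

lemma leftNormedLie_concat (x : R) (l : List R) (y : R) :
    leftNormedLie x (l ++ [y]) = leftNormedLie x l * y - y * leftNormedLie x l := by
  simp [leftNormedLie]

lemma IsC.brk {j : ℕ} {c : R} (h : IsC j c) (y : R) : IsC (j + 1) (c * y - y * c) := by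
  obtain ⟨x, l, hl, rfl⟩ := h
  exact ⟨x, l ++ [y], by simp [hl], (leftNormedLie_concat x l y).symm⟩

/-- The additive subgroup generated by commutators of weight `j + 1`. -/
def spanC (R : Type*) [Ring R] (j : ℕ) : AddSubgroup R :=
  AddSubgroup.closure {c : R | IsC j c}

lemma isC_mem_spanC {j : ℕ} {c : R} (h : IsC j c) : c ∈ spanC R j :=
  AddSubgroup.subset_closure h

lemma spanC_brk {j : ℕ} {z : R} (hz : z ∈ spanC R j) (y : R) :
    z * y - y * z ∈ spanC R (j + 1) := by
  refine AddSubgroup.closure_induction (fun c hc => ?_) ?_ (fun a b _ _ ha hb => ?_)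
    (fun a _ ha => ?_) hz
  · exact isC_mem_spanC (IsC.brk hc y)
  · simpa using (spanC R (j + 1)).zero_mem
  · have : (a + b) * y - y * (a + b) = (a * y - y * a) + (b * y - y * b) := by noncomm_ring
    rw [this]; exact add_mem ha hb
  · have : (-a) * y - y * (-a) = -(a * y - y * a) := by noncomm_ring
    rw [this]; exact neg_mem ha

/-- `[c, d]` of a weight-`(i+1)` and a weight-`(l.length+1)` commutator lies in the span of
weight-`(i + l.length + 2)` commutators. -/
lemma gammaList : ∀ (l : List R) (x : R) (i : ℕ) (c : R), IsC i c →
    c * leftNormedLie x l - leftNormedLie x l * c ∈ spanC R (i + l.length + 1) := by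
  intro l
  induction l using List.reverseRecOn with
  | nil =>
    intro x i c hc
    simpa [leftNormedLie] using isC_mem_spanC (IsC.brk hc x)
  | append_singleton l' y ih =>
    intro x i c hc
    rw [leftNormedLie_concat]
    set d := leftNormedLie x l' with hd
    have h1 : (c * d - d * c) * y - y * (c * d - d * c) ∈ spanC R (i + l'.length + 1 + 1) :=
      spanC_brk (ih x i c hc) y
    have h2 : (c * y - y * c) * d - d * (c * y - y * c) ∈ spanC R (i + 1 + l'.length + 1) :=
      ih x (i + 1) (c * y - y * c) (IsC.brk hc y)
    have hkey : c * (d * y - y * d) - (d * y - y * d) * c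
        = ((c * d - d * c) * y - y * (c * d - d * c))
          - ((c * y - y * c) * d - d * (c * y - y * c)) := by noncomm_ring
    have e1 : i + l'.length + 1 + 1 = i + (l' ++ [y]).length + 1 := by
      simp; omega
    have e2 : i + 1 + l'.length + 1 = i + (l' ++ [y]).length + 1 := by
      simp; omega
    rw [e1] at h1
    rw [e2] at h2
    rw [hkey]
    exact sub_mem h1 h2

lemma gammaC {i j : ℕ} {c d : R} (hc : IsC i c) (hd : IsC j d) :
    c * d - d * c ∈ spanC R (i + j + 1) := by
  obtain ⟨x, l, hl, rfl⟩ := hd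
  have := gammaList l x i c hc
  rwa [hl] at this

lemma isC_mem_lieTerm {j : ℕ} {c : R} (hc : IsC j c) : c ∈ lieTerm R (j + 1) := by
  by_cases hj : j + 1 ≤ 1
  · simp only [lieTerm, if_pos hj]
    exact TwoSidedIdeal.mem_top R
  · simp only [lieTerm, if_neg hj]
    obtain ⟨x, l, hl, rfl⟩ := hc
    exact TwoSidedIdeal.subset_span ⟨x, l, by rw [hl]; omega, rfl⟩

lemma lieTerm_succ_le (j : ℕ) : lieTerm R (j + 1) ≤ lieTerm R j := by
  by_cases hj : j ≤ 1
  · conv_rhs => rw [lieTerm, if_pos hj]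
    exact le_top
  · have h2 : ¬ (j + 1 ≤ 1) := by omega
    conv_lhs => rw [lieTerm, if_neg h2]
    intro z hz
    rw [TwoSidedIdeal.mem_span_iff] at hz
    refine hz _ ?_
    rintro g ⟨x, l, hl, rfl⟩
    have hl' : l.length = j := by omega
    rcases List.eq_nil_or_concat' l with rfl | ⟨l', y, rfl⟩
    · simp at hl'; omega
    · have hlen : l'.length + 1 = j := by simpa using hl'
      have hmem : leftNormedLie x l' ∈ lieTerm R (l'.length + 1) :=
        isC_mem_lieTerm ⟨x, l', rfl, rfl⟩
      rw [hlen] at hmem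
      rw [leftNormedLie_concat]
      exact sub_mem ((lieTerm R j).mul_mem_right _ y hmem)
        ((lieTerm R j).mul_mem_left y _ hmem)

lemma lieTerm_le_of_le {a b : ℕ} (h : a ≤ b) : lieTerm R b ≤ lieTerm R a := by
  induction b, h using Nat.le_induction with
  | base => exact le_refl _
  | succ n hn ih => exact (lieTerm_succ_le n).trans ih

lemma spanC_le_lieTerm {j k : ℕ} {z : R} (hz : z ∈ spanC R j) (h : k ≤ j + 1) :
    z ∈ lieTerm R k := by
  refine AddSubgroup.closure_induction (fun c hc => ?_) ?_ (fun a b _ _ ha hb => ?_)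
    (fun a _ ha => ?_) hz
  · exact lieTerm_le_of_le h (isC_mem_lieTerm hc)
  · exact zero_mem _
  · exact add_mem ha hb
  · exact neg_mem ha

/-- The key swap lemma: `[U,r][V,s] ≡ -[U,s][V,r]` modulo `lieTerm R k`. -/
lemma swapLemma {k p q : ℕ} {U V : R} (hU : IsC p U) (hV : IsC q V) (hk : k ≤ p + q + 3)
    (r s : R) :
    (U * r - r * U) * (V * s - s * V) + (U * s - s * U) * (V * r - r * V)
      ∈ lieTerm R k := by
  have h1 : U * (V * (s * r) - (s * r) * V) - (V * (s * r) - (s * r) * V) * U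
      ∈ spanC R (p + (q + 1) + 1) := gammaC hU (IsC.brk hV (s * r))
  have h2 : U * (V * r - r * V) - (V * r - r * V) * U ∈ spanC R (p + (q + 1) + 1) :=
    gammaC hU (IsC.brk hV r)
  have h3 : U * (V * s - s * V) - (V * s - s * V) * U ∈ spanC R (p + (q + 1) + 1) :=
    gammaC hU (IsC.brk hV s)
  have h4 : U * ((V * s - s * V) * r - r * (V * s - s * V))
      - ((V * s - s * V) * r - r * (V * s - s * V)) * U ∈ spanC R (p + (q + 2) + 1) :=
    gammaC hU (IsC.brk (IsC.brk hV s) r)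
  have m1 := spanC_le_lieTerm (k := k) h1 (by omega)
  have m2 := spanC_le_lieTerm (k := k) h2 (by omega)
  have m3 := spanC_le_lieTerm (k := k) h3 (by omega)
  have m4 := spanC_le_lieTerm (k := k) h4 (by omega)
  have key : (U * r - r * U) * (V * s - s * V) + (U * s - s * U) * (V * r - r * V)
      = (U * (V * (s * r) - (s * r) * V) - (V * (s * r) - (s * r) * V) * U)
        - s * (U * (V * r - r * V) - (V * r - r * V) * U)
        - (U * ((V * s - s * V) * r - r * (V * s - s * V))
            - ((V * s - s * V) * r - r * (V * s - s * V)) * U)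
        - r * (U * (V * s - s * V) - (V * s - s * V) * U) := by noncomm_ring
  rw [key]
  exact sub_mem (sub_mem (sub_mem m1 ((lieTerm R k).mul_mem_left s _ m2)) m4)
    ((lieTerm R k).mul_mem_left r _ m3)

/-- Moving a slot from the left core to the right core. -/
lemma moveSlot {k p q : ℕ} {U V : R} (hU : IsC p U) (hV : IsC q V) (hk : k ≤ p + q + 3)
    (a b c : R) :
    ((U * a - a * U) * b - b * (U * a - a * U)) * (V * c - c * V)
      - (U * b - b * U) * ((V * a - a * V) * c - c * (V * a - a * V)) ∈ lieTerm R k := by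
  have S1 := swapLemma hU hV hk a (b * c)
  have S2 := swapLemma hU hV hk a b
  have S3 := swapLemma hU hV hk a c
  have key : ((U * a - a * U) * b - b * (U * a - a * U)) * (V * c - c * V)
      - (U * b - b * U) * ((V * a - a * V) * c - c * (V * a - a * V))
      = ((U * a - a * U) * (V * (b * c) - (b * c) * V)
          + (U * (b * c) - (b * c) * U) * (V * a - a * V))
        - ((U * a - a * U) * (V * b - b * V) + (U * b - b * U) * (V * a - a * V)) * c
        - b * ((U * a - a * U) * (V * c - c * V) + (U * c - c * U) * (V * a - a * V)) := by
    noncomm_ring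
  rw [key]
  exact sub_mem (sub_mem S1 ((lieTerm R k).mul_mem_right _ c S2))
    ((lieTerm R k).mul_mem_left b _ S3)

/-- Core lemma: a product of two commutators of total weight at least `k + 2`
lies in `lieTerm R k`. -/
lemma coreLemma (k : ℕ) : ∀ p q : ℕ, ∀ U V r s : R, IsC p U → IsC q V → k ≤ p + q + 2 →
    (U * r - r * U) * (V * s - s * V) ∈ lieTerm R k := by
  intro p
  induction p with
  | zero =>
    intro q U V r s _ hV hk
    exact (lieTerm R k).mul_mem_left _ _
      (lieTerm_le_of_le (show k ≤ q + 2 by omega) (isC_mem_lieTerm (IsC.brk hV s)))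
  | succ p ih =>
    intro q U V r s hU hV hk
    obtain ⟨x, l, hl, rfl⟩ := hU
    rcases List.eq_nil_or_concat' l with rfl | ⟨l', a, rfl⟩
    · simp at hl
    · have hl' : l'.length = p := by simpa using hl
      have hU1 : IsC p (leftNormedLie x l') := ⟨x, l', hl', rfl⟩
      rw [leftNormedLie_concat]
      set U1 := leftNormedLie x l' with hU1def
      have hmove := moveSlot (k := k) hU1 hV (by omega) a r s
      have htail := ih (q + 1) U1 (V * a - a * V) r s hU1 (IsC.brk hV a) (by omega)
      have key : ((U1 * a - a * U1) * r - r * (U1 * a - a * U1)) * (V * s - s * V)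
          = (((U1 * a - a * U1) * r - r * (U1 * a - a * U1)) * (V * s - s * V)
              - (U1 * r - r * U1) * ((V * a - a * V) * s - s * (V * a - a * V)))
            + (U1 * r - r * U1) * ((V * a - a * V) * s - s * (V * a - a * V)) := by abel
      rw [key]
      exact add_mem hmove htail

/-- Product of an `m`-commutator, an arbitrary element and an `n`-commutator lies in
`lieTerm R (m + n - 2)`. -/
lemma comm_mul_mid_mul_comm {k m n : ℕ} (hm : 2 ≤ m) (hn : 2 ≤ n) (hk : k ≤ m + n - 2)
    {u v : R} (hu : IsC (m - 1) u) (hv : IsC (n - 1) v) (r : R) :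
    u * r * v ∈ lieTerm R k := by
  obtain ⟨x, l, hl, rfl⟩ := hu
  rcases List.eq_nil_or_concat' l with rfl | ⟨l', z, rfl⟩
  · simp at hl; omega
  obtain ⟨xv, lv, hlv, rfl⟩ := hv
  rcases List.eq_nil_or_concat' lv with rfl | ⟨lv', y, rfl⟩
  · simp at hlv; omega
  have hl' : l'.length + 1 = m - 1 := by simpa using hl
  have hlv' : lv'.length + 1 = n - 1 := by simpa using hlv
  rw [leftNormedLie_concat, leftNormedLie_concat]
  set U := leftNormedLie x l' with hUdef
  set V := leftNormedLie xv lv' with hVdef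
  have hU : IsC l'.length U := ⟨x, l', rfl, rfl⟩
  have hV : IsC lv'.length V := ⟨xv, lv', rfl, rfl⟩
  have hc1 := coreLemma k l'.length lv'.length U V (z * r) y hU hV (by omega)
  have hc2 := coreLemma k l'.length lv'.length U V r y hU hV (by omega)
  have key : (U * z - z * U) * r * (V * y - y * V)
      = (U * (z * r) - (z * r) * U) * (V * y - y * V)
        - z * ((U * r - r * U) * (V * y - y * V)) := by noncomm_ring
  rw [key]
  exact sub_mem hc1 ((lieTerm R k).mul_mem_left z _ hc2)

end GuptaLevinAux

/-- For `m, n ≥ 1`, `R^[m] · R^[n] ⊆ R^[m+n-2]`. -/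
theorem lieTerm_mul_lieTerm_subset
    (R : Type*) [Ring R] (m n : ℕ) (hm : 1 ≤ m) (hn : 1 ≤ n) :
    ∀ a ∈ lieTerm R m, ∀ b ∈ lieTerm R n, a * b ∈ lieTerm R (m + n - 2) := by
  intro a ha b hb
  rcases Nat.lt_or_ge m 2 with hm2 | hm2
  · exact (lieTerm R (m + n - 2)).mul_mem_left a b (lieTerm_le_of_le (by omega) hb)
  rcases Nat.lt_or_ge n 2 with hn2 | hn2
  · exact (lieTerm R (m + n - 2)).mul_mem_right a b (lieTerm_le_of_le (by omega) ha)
  set k := m + n - 2 with hkdef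
  -- main statement for a generator `v` of `lieTerm R n`
  have hTm : ∀ v : R, IsC (n - 1) v → ∀ a ∈ lieTerm R m, ∀ r : R, a * r * v ∈ lieTerm R k := by
    intro v hv a' ha'
    let J : TwoSidedIdeal R := TwoSidedIdeal.mk'
      {a : R | ∀ r : R, a * r * v ∈ lieTerm R k}
      (fun r => by simp only [zero_mul]; exact (lieTerm R k).zero_mem)
      (fun {x y} hx hy r => by
        have h := add_mem (hx r) (hy r)
        have e : (x + y) * r * v = x * r * v + y * r * v := by noncomm_ring
        rwa [e])
      (fun {x} hx r => by
        have h := neg_mem (hx r)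
        have e : (-x) * r * v = -(x * r * v) := by noncomm_ring
        rwa [e])
      (fun {x y} hy r => by
        have h := (lieTerm R k).mul_mem_left x _ (hy r)
        have e : (x * y) * r * v = x * (y * r * v) := by noncomm_ring
        rwa [e])
      (fun {x y} hx r => by
        have h := hx (y * r)
        have e : (x * y) * r * v = x * (y * r) * v := by noncomm_ring
        rwa [e])
    have haJ : a' ∈ J := by
      have hspan : lieTerm R m = TwoSidedIdeal.span
          {r : R | ∃ x l, l.length = m - 1 ∧ r = leftNormedLie x l} := by
        rw [lieTerm, if_neg (by omega)]
      rw [hspan, TwoSidedIdeal.mem_span_iff] at ha'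
      refine ha' J ?_
      rintro u ⟨x, l, hl, rfl⟩
      rw [SetLike.mem_coe, TwoSidedIdeal.mem_mk']
      intro r
      exact comm_mul_mid_mul_comm hm2 hn2 (le_refl _) ⟨x, l, hl, rfl⟩ hv r
    rw [TwoSidedIdeal.mem_mk'] at haJ
    exact haJ
  -- now use an ideal in the `b` variable
  let I : TwoSidedIdeal R := TwoSidedIdeal.mk'
    {b : R | ∀ a ∈ lieTerm R m, a * b ∈ lieTerm R k}
    (fun a _ => by simp only [mul_zero]; exact (lieTerm R k).zero_mem)
    (fun {x y} hx hy a ha => by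
      have h := add_mem (hx a ha) (hy a ha)
      have e : a * (x + y) = a * x + a * y := by noncomm_ring
      rwa [e])
    (fun {x} hx a ha => by
      have h := neg_mem (hx a ha)
      have e : a * (-x) = -(a * x) := by noncomm_ring
      rwa [e])
    (fun {x y} hy a ha => by
      have h := hy (a * x) ((lieTerm R m).mul_mem_right a x ha)
      have e : a * (x * y) = (a * x) * y := by noncomm_ring
      rwa [e])
    (fun {x y} hx a ha => by
      have h := (lieTerm R k).mul_mem_right _ y (hx a ha)
      have e : a * (x * y) = (a * x) * y := by noncomm_ring
      rwa [e])
  have hbI : b ∈ I := by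
    have hspan : lieTerm R n = TwoSidedIdeal.span
        {r : R | ∃ x l, l.length = n - 1 ∧ r = leftNormedLie x l} := by
      rw [lieTerm, if_neg (by omega)]
    rw [hspan, TwoSidedIdeal.mem_span_iff] at hb
    refine hb I ?_
    rintro v ⟨x, l, hl, rfl⟩
    rw [SetLike.mem_coe, TwoSidedIdeal.mem_mk']
    intro a ha
    have := hTm (leftNormedLie x l) ⟨x, l, hl, rfl⟩ a ha 1
    rwa [mul_one] at this
  rw [TwoSidedIdeal.mem_mk'] at hbI
  exact hbI a ha
end
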